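/- arXiv:1712.00880 — 3 statements merged into one kernel-verified Lean document; each statement's English description precedes it below -/
import Mathlib

section
/- For every complex number z with |z| ≥ 2, the difference between 1/(|z| - |z|⁻¹)² and 1/|z - z⁻¹|² is bounded in absolute value by 5/|z|³. -/
theorem stmt_0 (z : ℂ) (hz : 2 ≤ ‖z‖) :
    |1 / (‖z‖ - (‖z‖)⁻¹) ^ 2 - 1 / (‖z - z⁻¹‖) ^ 2|
      ≤ 5 / (‖z‖) ^ 3 := by
  set r := ‖z‖ with hrdef
  have hr0 : (0:ℝ) < r := by linarith
  have hu0 : (0:ℝ) < r⁻¹ := inv_pos.mpr hr0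
  have hru : r * r⁻¹ = 1 := mul_inv_cancel₀ (ne_of_gt hr0)
  have hu2 : r⁻¹ ≤ 1/2 := by
    rw [inv_le_comm₀ (by linarith) (by norm_num)]; simpa using hz
  have ha : (0:ℝ) < r - r⁻¹ := by linarith
  have habs : ‖z⁻¹‖ = r⁻¹ := norm_inv z
  set b := ‖z - z⁻¹‖ with hbdef
  have hb_lo : r - r⁻¹ ≤ b := by
    have := norm_sub_norm_le z z⁻¹
    simpa [habs, ← hrdef, ← hbdef] using this
  have hb_hi : b ≤ r + r⁻¹ := by
    have := norm_sub_le z z⁻¹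
    simpa [habs, ← hrdef, ← hbdef] using this
  have hb0 : (0:ℝ) < b := lt_of_lt_of_le ha hb_lo
  have hnonneg : 0 ≤ 1 / (r - r⁻¹) ^ 2 - 1 / b ^ 2 := by
    have h1 : (r - r⁻¹)^2 ≤ b^2 := by nlinarith
    have h2 : (0:ℝ) < (r - r⁻¹)^2 := by positivity
    have := one_div_le_one_div_of_le h2 h1
    linarith
  rw [abs_of_nonneg hnonneg]
  have step1 : 1 / (r - r⁻¹) ^ 2 - 1 / b ^ 2 ≤ 1 / (r - r⁻¹) ^ 2 - 1 / (r + r⁻¹) ^ 2 := by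
    have h1 : b^2 ≤ (r + r⁻¹)^2 := by nlinarith
    have h2 : (0:ℝ) < b^2 := by positivity
    have := one_div_le_one_div_of_le h2 h1
    linarith
  refine step1.trans ?_
  rw [div_sub_div _ _ (by positivity) (by positivity), div_le_div_iff₀ (by positivity) (by positivity)]
  nlinarith [sq_nonneg r, sq_nonneg (r - 2), sq_nonneg (r*r - 1), mul_pos hr0 hr0, sq_nonneg (r⁻¹), mul_pos (mul_pos hr0 hr0) hr0]
end

section
/- Let r₁, r₂ be real numbers, 1 < Δ ≤ V, and for X > 1 set s = log X and h_s(r) = 2·sinh(s(1+ir))/(1+ir) + 2·sinh(s(1−ir))/(1−ir) − 4·sin(sr)/r. Then there is an absolute constant C such that |(1/Δ)∫_V^{V+Δ} h_s(r₁)·h_s(r₂) dX| ≤ C·(V³/Δ)·u(r₁)·u(r₂)·u(|r₁|−|r₂|), where u(r) = (1+|r|)⁻¹. -/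
open Complex intervalIntegral MeasureTheory Set

noncomputable def hTest (s r : ℝ) : ℂ :=
  2 * Complex.sinh (s * (1 + Complex.I * r)) / (1 + Complex.I * r)
    + 2 * Complex.sinh (s * (1 - Complex.I * r)) / (1 - Complex.I * r)
    - 4 * Real.sin (s * r) / r

noncomputable def El (c : ℂ) (X : ℝ) : ℂ := Complex.exp (c * (Real.log X : ℂ))

noncomputable def gg (c : ℂ) (X : ℝ) : ℂ := (El c X - El (-c) X) / c

noncomputable def hD (r X : ℝ) : ℂ :=
  (2 * Complex.cosh ((Real.log X : ℂ) * (1 + Complex.I * r))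
   + 2 * Complex.cosh ((Real.log X : ℂ) * (1 - Complex.I * r))
   - if r = 0 then 0 else 4 * ((Real.cos (Real.log X * r) : ℝ) : ℂ)) / (X : ℂ)

/-! ### basic facts about `El` -/

lemma El_norm (c : ℂ) (X : ℝ) : ‖El c X‖ = Real.exp (c.re * Real.log X) := by
  rw [El, Complex.norm_exp]
  norm_num

lemma El_mul (a b : ℂ) (X : ℝ) : El a X * El b X = El (a + b) X := by
  rw [El, El, El, ← Complex.exp_add]; ring_nf

lemma El_norm_le {c : ℂ} {X B : ℝ} (n : ℕ) (hc : c.re ≤ n) (hX : 1 ≤ X) (hXB : X ≤ B) :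
    ‖El c X‖ ≤ B ^ n := by
  have hlX : 0 ≤ Real.log X := Real.log_nonneg hX
  have hB : 1 ≤ B := le_trans hX hXB
  have h1 : c.re * Real.log X ≤ n * Real.log B := by
    calc c.re * Real.log X ≤ n * Real.log X := mul_le_mul_of_nonneg_right hc hlX
      _ ≤ n * Real.log B :=
          mul_le_mul_of_nonneg_left (Real.log_le_log (by linarith) hXB) (by positivity)
  rw [El_norm]
  calc Real.exp (c.re * Real.log X) ≤ Real.exp (n * Real.log B) := Real.exp_le_exp.2 h1
    _ = B ^ n := by rw [Real.exp_nat_mul, Real.exp_log (by linarith)]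

lemma El_contOn (c : ℂ) {s : Set ℝ} (hs : ∀ x ∈ s, (0:ℝ) < x) : ContinuousOn (El c) s := by
  apply Complex.continuous_exp.comp_continuousOn
  apply ContinuousOn.mul continuousOn_const
  exact Complex.continuous_ofReal.comp_continuousOn
    (Real.continuousOn_log.mono (fun x hx => ne_of_gt (hs x hx)))

lemma log_hasDeriv {X : ℝ} (hX : 0 < X) :
    HasDerivAt (fun Y : ℝ => ((Real.log Y : ℝ) : ℂ)) ((X : ℂ)⁻¹) X := by
  have := (Real.hasDerivAt_log (ne_of_gt hX)).ofReal_comp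
  simpa using this

lemma El_hasDeriv (c : ℂ) {X : ℝ} (hX : 0 < X) :
    HasDerivAt (fun Y => El c Y) (c * El c X * (X : ℂ)⁻¹) X := by
  have h1 : HasDerivAt (fun Y : ℝ => c * ((Real.log Y : ℝ) : ℂ)) (c * (X : ℂ)⁻¹) X :=
    (log_hasDeriv hX).const_mul c
  have h2 := (Complex.hasDerivAt_exp (c * (Real.log X : ℂ))).comp X h1
  simpa [El, Function.comp_def, mul_comm, mul_assoc, mul_left_comm] using h2

lemma El_one {X : ℝ} (hX : 0 < X) : El 1 X = (X : ℂ) := by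
  rw [El, one_mul, ← Complex.ofReal_exp, Real.exp_log hX]

lemma El_antideriv {c : ℂ} {X : ℝ} (hc : c ≠ -1) (hX : 0 < X) :
    HasDerivAt (fun Y => El (c+1) Y / (c+1)) (El c X) X := by
  have hc1 : c + 1 ≠ 0 := by intro h; apply hc; linear_combination h
  have hX0 : (X : ℂ) ≠ 0 := by exact_mod_cast ne_of_gt hX
  have h := (El_hasDeriv (c+1) hX).div_const (c+1)
  have hEl : El (c+1) X = El c X * X := by rw [← El_mul c 1 X, El_one hX]
  refine h.congr_deriv ?_
  rw [hEl]
  field_simp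

/-! ### the elementary integral bounds -/

lemma uIcc_sub {V D : ℝ} (hV : 1 ≤ V) (hD : 0 < D) (hDV : D ≤ V) :
    Set.uIcc V (V+D) ⊆ {x : ℝ | 1 ≤ x ∧ x ≤ 2*V} := by
  rw [Set.uIcc_of_le (by linarith)]
  intro x hx
  exact ⟨by linarith [hx.1], by linarith [hx.2]⟩

lemma El_intble {V D : ℝ} (hV : 1 ≤ V) (hD : 0 < D) (hDV : D ≤ V) (c : ℂ) :
    IntervalIntegrable (El c) volume V (V+D) :=
  (El_contOn c (fun x hx => by
    have := uIcc_sub hV hD hDV hx; linarith [this.1])).intervalIntegrable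

lemma integ_El {V D : ℝ} {c : ℂ} (hV : 1 ≤ V) (hD : 0 < D) (hDV : D ≤ V)
    (hc2 : c.re ≤ 2) (hc : c ≠ -1) :
    ‖∫ X in V..(V+D), El c X‖ ≤ 16 * V^3 / ‖c+1‖ := by
  have hc1 : c + 1 ≠ 0 := by intro h; apply hc; linear_combination h
  have key : ∫ X in V..(V+D), El c X
      = El (c+1) (V+D) / (c+1) - El (c+1) V / (c+1) := by
    apply intervalIntegral.integral_eq_sub_of_hasDerivAt (f := fun Y => El (c+1) Y / (c+1))
    · intro x hx
      have := uIcc_sub hV hD hDV hx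
      exact El_antideriv hc (by linarith [this.1])
    · exact El_intble hV hD hDV c
  rw [key]
  have hb : ∀ x : ℝ, 1 ≤ x → x ≤ 2*V → ‖El (c+1) x‖ ≤ (2*V)^3 := by
    intro x h1 h2
    exact El_norm_le 3 (by simp; norm_num; linarith [hc2]) h1 h2
  have h1 := hb (V+D) (by linarith) (by linarith)
  have h2 := hb V hV (by linarith)
  have hn : ‖c+1‖ > 0 := norm_pos_iff.2 hc1
  calc ‖El (c+1) (V+D) / (c+1) - El (c+1) V / (c+1)‖
      ≤ ‖El (c+1) (V+D) / (c+1)‖ + ‖El (c+1) V / (c+1)‖ := norm_sub_le _ _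
    _ = ‖El (c+1) (V+D)‖ / ‖c+1‖ + ‖El (c+1) V‖ / ‖c+1‖ := by rw [norm_div, norm_div]
    _ ≤ (2*V)^3 / ‖c+1‖ + (2*V)^3 / ‖c+1‖ := by gcongr
    _ = 16 * V^3 / ‖c+1‖ := by ring

lemma integ_El_min {V D : ℝ} {c : ℂ} (hV : 1 ≤ V) (hD : 0 < D) (hDV : D ≤ V) (hc2 : c.re ≤ 2) :
    ‖∫ X in V..(V+D), El c X‖ ≤ 32 * V^3 * (1 + |c.im|)⁻¹ := by
  have hV3 : (0:ℝ) < V^3 := by positivity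
  have h0 : (0:ℝ) < 1 + |c.im| := by positivity
  have hmul : (1 + |c.im|)⁻¹ * (1 + |c.im|) = 1 := inv_mul_cancel₀ (ne_of_gt h0)
  have hinvpos : (0:ℝ) < (1 + |c.im|)⁻¹ := inv_pos.2 h0
  rcases le_or_gt |c.im| 1 with him | him
  · have htriv : ‖∫ X in V..(V+D), El c X‖ ≤ (2*V)^2 * |(V+D) - V| := by
      apply intervalIntegral.norm_integral_le_of_norm_le_const
      intro x hx
      have hx2 : x ∈ Set.uIcc V (V+D) := Set.uIoc_subset_uIcc hx
      have := uIcc_sub hV hD hDV hx2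
      exact El_norm_le 2 (by norm_num; linarith) this.1 this.2
    have h4 : (2*V)^2 * |(V+D) - V| ≤ 4 * V^3 := by
      rw [show (V+D) - V = D by ring, abs_of_pos hD]
      nlinarith
    have hu : (1/2 : ℝ) ≤ (1 + |c.im|)⁻¹ := by nlinarith
    calc ‖∫ X in V..(V+D), El c X‖ ≤ 4 * V^3 := le_trans htriv h4
      _ ≤ 32 * V^3 * (1 + |c.im|)⁻¹ := by nlinarith
  · have hc : c ≠ -1 := by
      intro h
      rw [h] at him
      simp at him
      linarith
    have h1 := integ_El hV hD hDV hc2 hc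
    have hn : |c.im| ≤ ‖c+1‖ := by
      calc |c.im| = |(c+1).im| := by simp
        _ ≤ ‖c+1‖ := Complex.abs_im_le_norm _
    have hnpos : (0:ℝ) < |c.im| := by linarith
    have hkey : (1/2 : ℝ) ≤ (1 + |c.im|)⁻¹ * |c.im| := by nlinarith
    calc ‖∫ X in V..(V+D), El c X‖ ≤ 16 * V^3 / ‖c+1‖ := h1
      _ ≤ 16 * V^3 / |c.im| := by gcongr
      _ ≤ 32 * V^3 * (1 + |c.im|)⁻¹ := by
          rw [div_le_iff₀ hnpos]
          nlinarith

/-! ### structure of `hTest` -/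

lemma one_add_I_ne (r : ℝ) : (1 + Complex.I * r) ≠ 0 := by
  intro h; have := congrArg Complex.re h; simp at this

lemma one_sub_I_ne (r : ℝ) : (1 - Complex.I * r) ≠ 0 := by
  intro h; have := congrArg Complex.re h; simp at this

lemma gg_eq_sinh (c : ℂ) (X : ℝ) :
    gg c X = 2 * Complex.sinh (c * (Real.log X : ℂ)) / c := by
  rw [gg, El, El, Complex.sinh]
  ring_nf

lemma hEq (r : ℝ) (X : ℝ) :
    hTest (Real.log X) r = gg (1 + Complex.I * r) X + gg (1 - Complex.I * r) X
      - 2 * gg (Complex.I * r) X := by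
  rw [hTest, gg_eq_sinh, gg_eq_sinh, gg_eq_sinh]
  rw [mul_comm ((Real.log X : ℂ)) (1 + Complex.I * r),
    mul_comm ((Real.log X : ℂ)) (1 - Complex.I * r)]
  congr 1
  rcases eq_or_ne r 0 with rfl | hr
  · simp
  · have hrC : (r : ℂ) ≠ 0 := Complex.ofReal_ne_zero.2 hr
    have hsin : ((Real.sin (Real.log X * r) : ℝ) : ℂ)
        = Complex.sin ((r:ℂ) * (Real.log X : ℂ)) := by
      rw [Complex.ofReal_sin, Complex.ofReal_mul, mul_comm]
    rw [hsin]
    rw [show Complex.I * (r:ℂ) * (Real.log X : ℂ) = ((r:ℂ) * (Real.log X:ℂ)) * Complex.I by ring,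
      Complex.sinh_mul_I]
    field_simp
    ring

lemma norm_sinh_le (z : ℂ) : ‖Complex.sinh z‖ ≤ (Real.exp z.re + Real.exp (-z.re)) / 2 := by
  rw [Complex.sinh]
  calc ‖(Complex.exp z - Complex.exp (-z)) / 2‖
      = ‖Complex.exp z - Complex.exp (-z)‖ / 2 := by rw [norm_div]; norm_num
    _ ≤ (‖Complex.exp z‖ + ‖Complex.exp (-z)‖) / 2 := by
        gcongr; exact norm_sub_le _ _
    _ = (Real.exp z.re + Real.exp (-z.re)) / 2 := by
        rw [Complex.norm_exp, Complex.norm_exp]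
        simp

lemma norm_cosh_le (z : ℂ) : ‖Complex.cosh z‖ ≤ (Real.exp z.re + Real.exp (-z.re)) / 2 := by
  rw [Complex.cosh]
  calc ‖(Complex.exp z + Complex.exp (-z)) / 2‖
      = ‖Complex.exp z + Complex.exp (-z)‖ / 2 := by rw [norm_div]; norm_num
    _ ≤ (‖Complex.exp z‖ + ‖Complex.exp (-z)‖) / 2 := by
        gcongr; exact norm_add_le _ _
    _ = (Real.exp z.re + Real.exp (-z.re)) / 2 := by
        rw [Complex.norm_exp, Complex.norm_exp]
        simp

lemma norm_one_add_I_ge (r : ℝ) : 1 ≤ ‖1 + Complex.I * (r:ℂ)‖ := by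
  calc (1:ℝ) = |(1 + Complex.I * (r:ℂ)).re| := by simp
    _ ≤ ‖1 + Complex.I * (r:ℂ)‖ := Complex.abs_re_le_norm _

lemma norm_one_sub_I_ge (r : ℝ) : 1 ≤ ‖1 - Complex.I * (r:ℂ)‖ := by
  calc (1:ℝ) = |(1 - Complex.I * (r:ℂ)).re| := by simp
    _ ≤ ‖1 - Complex.I * (r:ℂ)‖ := Complex.abs_re_le_norm _

lemma h_norm (r : ℝ) {X : ℝ} (hX : 1 ≤ X) : ‖hTest (Real.log X) r‖ ≤ 8 * X := by
  have hX0 : (0:ℝ) < X := by linarith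
  set s := Real.log X with hs
  have hs0 : 0 ≤ s := Real.log_nonneg hX
  have hsX : Real.exp s = X := Real.exp_log hX0
  have hsX' : Real.exp (-s) ≤ X := by
    rw [Real.exp_neg, hsX]
    calc X⁻¹ ≤ 1 := by rw [inv_le_one_iff₀]; right; exact hX
      _ ≤ X := hX
  have hsle : s ≤ X := by
    calc s ≤ X - 1 := Real.log_le_sub_one_of_pos hX0
      _ ≤ X := by linarith
  have hsinh : ∀ c : ℂ, c.re = 1 → ‖Complex.sinh ((s:ℂ) * c)‖ ≤ X := by
    intro c hc
    have := norm_sinh_le ((s:ℂ) * c)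
    have hre : ((s:ℂ) * c).re = s := by simp [Complex.mul_re, hc]
    rw [hre] at this
    calc ‖Complex.sinh ((s:ℂ) * c)‖ ≤ (Real.exp s + Real.exp (-s)) / 2 := this
      _ ≤ (X + X) / 2 := by gcongr <;> simp [hsX, hsX']
      _ = X := by ring
  have hterm : ∀ (c : ℂ), c.re = 1 → 1 ≤ ‖c‖ → ‖2 * Complex.sinh ((s:ℂ) * c) / c‖ ≤ 2 * X := by
    intro c hc hnc
    rw [norm_div, norm_mul]
    have h1 := hsinh c hc
    calc ‖(2:ℂ)‖ * ‖Complex.sinh ((s:ℂ) * c)‖ / ‖c‖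
        ≤ ‖(2:ℂ)‖ * ‖Complex.sinh ((s:ℂ) * c)‖ := div_le_self (by positivity) hnc
      _ ≤ 2 * X := by
          rw [Complex.norm_ofNat]
          nlinarith [norm_nonneg (Complex.sinh ((s:ℂ) * c))]
  have hsin : ‖(4 * (Real.sin (s * r) : ℂ) / (r:ℂ))‖ ≤ 4 * X := by
    rcases eq_or_ne r 0 with rfl | hr
    · simp
      positivity
    · have h2 : (0:ℝ) < |r| := abs_pos.2 hr
      have hnorm : ‖4 * ((Real.sin (s * r) : ℝ) : ℂ) / ((r:ℝ) : ℂ)‖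
          = 4 * |Real.sin (s * r)| / |r| := by
        rw [norm_div, norm_mul, Complex.norm_real, Complex.norm_real, Complex.norm_ofNat,
          Real.norm_eq_abs, Real.norm_eq_abs]
      rw [hnorm, div_le_iff₀ h2]
      have h1 : |Real.sin (s * r)| ≤ |s * r| := Real.abs_sin_le_abs
      have habs : |s * r| = s * |r| := by rw [abs_mul, _root_.abs_of_nonneg hs0]
      nlinarith
  calc ‖hTest s r‖ ≤ ‖2 * Complex.sinh ((s:ℂ) * (1 + Complex.I * r)) / (1 + Complex.I * r)‖
        + ‖2 * Complex.sinh ((s:ℂ) * (1 - Complex.I * r)) / (1 - Complex.I * r)‖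
        + ‖4 * (Real.sin (s * r) : ℂ) / (r:ℂ)‖ := by
        rw [hTest]
        exact norm_sub_le _ _ |>.trans (by gcongr; exact norm_add_le _ _)
    _ ≤ 2 * X + 2 * X + 4 * X :=
        add_le_add (add_le_add (hterm _ (by simp) (norm_one_add_I_ge r))
          (hterm _ (by simp) (norm_one_sub_I_ge r))) hsin
    _ = 8 * X := by ring

lemma hD_hasDeriv (r : ℝ) {X : ℝ} (hX : 0 < X) :
    HasDerivAt (fun Y => hTest (Real.log Y) r) (hD r X) X := by
  have hX0 : (X : ℂ) ≠ 0 := by exact_mod_cast ne_of_gt hX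
  have hlog := log_hasDeriv hX
  rcases eq_or_ne r 0 with rfl | hr
  · have heq : (fun Y => hTest (Real.log Y) 0)
        = (fun Y : ℝ => 2 * Complex.sinh ((Real.log Y : ℂ))
            + 2 * Complex.sinh ((Real.log Y : ℂ))) := by
      funext Y
      simp [hTest]
    rw [heq]
    have t : HasDerivAt (fun Y : ℝ => Complex.sinh ((Real.log Y : ℂ)))
        (Complex.cosh ((Real.log X : ℂ)) * (X:ℂ)⁻¹) X := by
      have := (Complex.hasDerivAt_sinh ((Real.log X : ℂ))).comp X hlog
      simpa [Function.comp_def] using this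
    have := (t.const_mul (2:ℂ)).add (t.const_mul (2:ℂ))
    refine (this.congr_deriv ?_)
    symm
    rw [hD]
    simp only [if_pos rfl]
    field_simp
    simp only [Complex.ofReal_zero, mul_zero, add_zero, sub_zero, mul_one, ↓reduceIte]
    ring
  · have h1 : (1 + Complex.I * r) ≠ 0 := one_add_I_ne r
    have h2 : (1 - Complex.I * r) ≠ 0 := one_sub_I_ne r
    have hrC : (r : ℂ) ≠ 0 := Complex.ofReal_ne_zero.2 hr
    have p1 : HasDerivAt (fun Y : ℝ => ((Real.log Y : ℝ):ℂ) * (1 + Complex.I * r))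
        ((X:ℂ)⁻¹ * (1 + Complex.I * r)) X := hlog.mul_const _
    have s1 : HasDerivAt (fun Y : ℝ => Complex.sinh (((Real.log Y : ℝ):ℂ) * (1 + Complex.I * r)))
        (Complex.cosh ((Real.log X : ℂ) * (1 + Complex.I * r))
          * ((X:ℂ)⁻¹ * (1 + Complex.I * r))) X := by
      have := (Complex.hasDerivAt_sinh _).comp X p1
      simpa [Function.comp_def] using this
    have t1 := (s1.const_mul (2:ℂ)).div_const (1 + Complex.I * r)
    have p2 : HasDerivAt (fun Y : ℝ => ((Real.log Y : ℝ):ℂ) * (1 - Complex.I * r))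
        ((X:ℂ)⁻¹ * (1 - Complex.I * r)) X := hlog.mul_const _
    have s2 : HasDerivAt (fun Y : ℝ => Complex.sinh (((Real.log Y : ℝ):ℂ) * (1 - Complex.I * r)))
        (Complex.cosh ((Real.log X : ℂ) * (1 - Complex.I * r))
          * ((X:ℂ)⁻¹ * (1 - Complex.I * r))) X := by
      have := (Complex.hasDerivAt_sinh _).comp X p2
      simpa [Function.comp_def] using this
    have t2 := (s2.const_mul (2:ℂ)).div_const (1 - Complex.I * r)
    have q : HasDerivAt (fun Y : ℝ => Real.log Y * r) (X⁻¹ * r) X :=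
      (Real.hasDerivAt_log (ne_of_gt hX)).mul_const r
    have s3 : HasDerivAt (fun Y : ℝ => Real.sin (Real.log Y * r))
        (Real.cos (Real.log X * r) * (X⁻¹ * r)) X := by
      have := (Real.hasDerivAt_sin (Real.log X * r)).comp X q
      simpa [Function.comp_def] using this
    have s3' := s3.ofReal_comp
    have t3 := (s3'.const_mul (4:ℂ)).div_const (r : ℂ)
    have total := (t1.add t2).sub t3
    refine (total.congr_deriv ?_)
    symm
    rw [hD]
    simp only [if_neg hr]
    push_cast
    field_simp

lemma hD_norm (r : ℝ) {X : ℝ} (hX : 1 ≤ X) : ‖hD r X‖ ≤ 8 := by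
  have hX0 : (0:ℝ) < X := by linarith
  set s := Real.log X with hs
  have hs0 : 0 ≤ s := Real.log_nonneg hX
  have hsX : Real.exp s = X := Real.exp_log hX0
  have hsX' : Real.exp (-s) ≤ X := by
    rw [Real.exp_neg, hsX]
    calc X⁻¹ ≤ 1 := by rw [inv_le_one_iff₀]; right; exact hX
      _ ≤ X := hX
  have hcosh : ∀ c : ℂ, c.re = 1 → ‖Complex.cosh ((s:ℂ) * c)‖ ≤ X := by
    intro c hc
    have := norm_cosh_le ((s:ℂ) * c)
    have hre : ((s:ℂ) * c).re = s := by simp [Complex.mul_re, hc]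
    rw [hre] at this
    calc ‖Complex.cosh ((s:ℂ) * c)‖ ≤ (Real.exp s + Real.exp (-s)) / 2 := this
      _ ≤ (X + X) / 2 := by gcongr <;> simp [hsX, hsX']
      _ = X := by ring
  have hif : ‖(if r = 0 then (0:ℂ) else 4 * ((Real.cos (s * r) : ℝ) : ℂ))‖ ≤ 4 := by
    rcases eq_or_ne r 0 with rfl | hr
    · simp
    · rw [if_neg hr, norm_mul, Complex.norm_ofNat, Complex.norm_real, Real.norm_eq_abs]
      nlinarith [Real.abs_cos_le_one (s * r)]
  rw [hD, norm_div]
  have hnum : ‖2 * Complex.cosh ((s:ℂ) * (1 + Complex.I * r))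
      + 2 * Complex.cosh ((s:ℂ) * (1 - Complex.I * r))
      - if r = 0 then (0:ℂ) else 4 * ((Real.cos (s * r) : ℝ) : ℂ)‖ ≤ 8 * X := by
    have b1 := hcosh (1 + Complex.I * r) (by simp)
    have b2 := hcosh (1 - Complex.I * r) (by simp)
    calc ‖2 * Complex.cosh ((s:ℂ) * (1 + Complex.I * r))
        + 2 * Complex.cosh ((s:ℂ) * (1 - Complex.I * r))
        - if r = 0 then (0:ℂ) else 4 * ((Real.cos (s * r) : ℝ) : ℂ)‖
        ≤ ‖2 * Complex.cosh ((s:ℂ) * (1 + Complex.I * r))‖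
          + ‖2 * Complex.cosh ((s:ℂ) * (1 - Complex.I * r))‖
          + ‖(if r = 0 then (0:ℂ) else 4 * ((Real.cos (s * r) : ℝ) : ℂ))‖ :=
          norm_sub_le _ _ |>.trans (by gcongr; exact norm_add_le _ _)
      _ ≤ 2 * X + 2 * X + 4 := by
          have e1 : ‖2 * Complex.cosh ((s:ℂ) * (1 + Complex.I * r))‖ ≤ 2 * X := by
            rw [norm_mul, Complex.norm_ofNat]
            nlinarith [norm_nonneg (Complex.cosh ((s:ℂ) * (1 + Complex.I * r)))]
          have e2 : ‖2 * Complex.cosh ((s:ℂ) * (1 - Complex.I * r))‖ ≤ 2 * X := by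
            rw [norm_mul, Complex.norm_ofNat]
            nlinarith [norm_nonneg (Complex.cosh ((s:ℂ) * (1 - Complex.I * r)))]
          exact add_le_add (add_le_add e1 e2) hif
      _ ≤ 8 * X := by nlinarith
  rw [Complex.norm_real, Real.norm_eq_abs, _root_.abs_of_pos hX0]
  rw [div_le_iff₀ hX0]
  calc ‖_‖ ≤ 8 * X := hnum
    _ = 8 * X := rfl

lemma hTest_contOn (r : ℝ) {s : Set ℝ} (hs : ∀ x ∈ s, (0:ℝ) < x) :
    ContinuousOn (fun X => hTest (Real.log X) r) s :=
  fun x hx => ((hD_hasDeriv r (hs x hx)).continuousAt).continuousWithinAt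

lemma hD_contOn (r : ℝ) {s : Set ℝ} (hs : ∀ x ∈ s, (0:ℝ) < x) :
    ContinuousOn (hD r) s := by
  have hlog : ContinuousOn (fun X : ℝ => ((Real.log X : ℝ):ℂ)) s :=
    Complex.continuous_ofReal.comp_continuousOn
      (Real.continuousOn_log.mono (fun x hx => ne_of_gt (hs x hx)))
  apply ContinuousOn.div
  · apply ContinuousOn.sub
    · apply ContinuousOn.add
      · exact continuousOn_const.mul
          (Complex.continuous_cosh.comp_continuousOn (hlog.mul continuousOn_const))
      · exact continuousOn_const.mul
          (Complex.continuous_cosh.comp_continuousOn (hlog.mul continuousOn_const))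
    · rcases eq_or_ne r 0 with rfl | hr
      · simp only [if_pos rfl]; exact continuousOn_const
      · simp only [if_neg hr]
        apply continuousOn_const.mul
        apply Complex.continuous_ofReal.comp_continuousOn
        apply Real.continuous_cos.comp_continuousOn
        exact (Real.continuousOn_log.mono (fun x hx => ne_of_gt (hs x hx))).mul continuousOn_const
  · exact Complex.continuous_ofReal.continuousOn
  · intro x hx
    exact_mod_cast ne_of_gt (hs x hx)

lemma gg_contOn (c : ℂ) {s : Set ℝ} (hs : ∀ x ∈ s, (0:ℝ) < x) :
    ContinuousOn (gg c) s :=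
  ((El_contOn c hs).sub (El_contOn (-c) hs)).div_const c

/-! ### integration by parts bound -/

lemma im_ne_imp_ne_neg_one {e : ℂ} (h : e.im ≠ 0) : e ≠ -1 := by
  intro hh
  rw [hh] at h
  simp at h

lemma parts {V D : ℝ} (hV : 1 ≤ V) (hD0 : 0 < D) (hDV : D ≤ V) (r : ℝ) {e : ℂ}
    (he : e.re ≤ 1) (heim : 1 ≤ |e.im|) :
    ‖∫ X in V..(V+D), hTest (Real.log X) r * El e X‖ ≤ 256 * V^3 * (1+|e.im|)⁻¹ := by
  have hVD : V ≤ V + D := by linarith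
  have hsub := uIcc_sub hV hD0 hDV
  have hpos : ∀ x ∈ Set.uIcc V (V+D), (0:ℝ) < x := fun x hx => by linarith [(hsub hx).1]
  have him0 : e.im ≠ 0 := by intro h; rw [h] at heim; norm_num at heim
  have hene : e ≠ -1 := im_ne_imp_ne_neg_one him0
  have he1 : e + 1 ≠ 0 := by
    intro h
    apply hene
    linear_combination h
  have key : ∫ X in V..(V+D), hTest (Real.log X) r * El e X
      = hTest (Real.log (V+D)) r * (El (e+1) (V+D) / (e+1))
        - hTest (Real.log V) r * (El (e+1) V / (e+1))
        - ∫ X in V..(V+D), hD r X * (El (e+1) X / (e+1)) := by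
    apply intervalIntegral.integral_mul_deriv_eq_deriv_mul_of_hasDerivAt
      (u := fun X => hTest (Real.log X) r) (v := fun X => El (e+1) X / (e+1))
      (u' := hD r) (v' := El e)
    · exact hTest_contOn r hpos
    · exact (El_contOn (e+1) hpos).div_const (e+1)
    · intro x hx
      rw [min_eq_left hVD, max_eq_right hVD] at hx
      exact hD_hasDeriv r (by linarith [hx.1])
    · intro x hx
      rw [min_eq_left hVD, max_eq_right hVD] at hx
      exact El_antideriv hene (by linarith [hx.1])
    · exact (hD_contOn r hpos).intervalIntegrable
    · exact El_intble hV hD0 hDV e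
  rw [key]
  have hEn : (0:ℝ) < ‖e+1‖ := norm_pos_iff.2 he1
  have hvbound : ∀ x : ℝ, 1 ≤ x → x ≤ 2*V → ‖El (e+1) x / (e+1)‖ ≤ 4*V^2 / ‖e+1‖ := by
    intro x h1 h2
    rw [norm_div]
    have := El_norm_le (c := e+1) 2 (by simp; norm_num; linarith) h1 h2
    calc ‖El (e+1) x‖ / ‖e+1‖ ≤ (2*V)^2 / ‖e+1‖ := by gcongr
      _ = 4*V^2 / ‖e+1‖ := by ring
  have hb : ‖hTest (Real.log (V+D)) r * (El (e+1) (V+D) / (e+1))‖ ≤ 16*V * (4*V^2/‖e+1‖) := by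
    rw [norm_mul]
    have h1 := h_norm r (show (1:ℝ) ≤ V + D by linarith)
    have h2 := hvbound (V+D) (by linarith) (by linarith)
    have := norm_nonneg (hTest (Real.log (V+D)) r)
    have := norm_nonneg (El (e+1) (V+D) / (e+1))
    apply mul_le_mul _ h2 (by positivity) (by positivity)
    calc ‖hTest (Real.log (V+D)) r‖ ≤ 8*(V+D) := h1
      _ ≤ 16*V := by linarith
  have ha : ‖hTest (Real.log V) r * (El (e+1) V / (e+1))‖ ≤ 8*V * (4*V^2/‖e+1‖) := by
    rw [norm_mul]
    have h1 := h_norm r hV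
    have h2 := hvbound V (by linarith) (by linarith)
    exact mul_le_mul h1 h2 (by positivity) (by positivity)
  have hi : ‖∫ X in V..(V+D), hD r X * (El (e+1) X / (e+1))‖
      ≤ 8 * (4*V^2/‖e+1‖) * |(V+D) - V| := by
    apply intervalIntegral.norm_integral_le_of_norm_le_const
    intro x hx
    have hx2 := hsub (Set.uIoc_subset_uIcc hx)
    rw [norm_mul]
    exact mul_le_mul (hD_norm r hx2.1) (hvbound x hx2.1 hx2.2) (norm_nonneg _) (by norm_num)
  have habs : |(V+D) - V| = D := by rw [show (V+D) - V = D by ring, abs_of_pos hD0]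
  rw [habs] at hi
  have horder : ‖hTest (Real.log (V+D)) r * (El (e+1) (V+D) / (e+1))
        - hTest (Real.log V) r * (El (e+1) V / (e+1))
        - ∫ X in V..(V+D), hD r X * (El (e+1) X / (e+1))‖
      ≤ 16*V*(4*V^2/‖e+1‖) + 8*V*(4*V^2/‖e+1‖) + 8*(4*V^2/‖e+1‖)*D := by
    calc _ ≤ ‖hTest (Real.log (V+D)) r * (El (e+1) (V+D) / (e+1))
          - hTest (Real.log V) r * (El (e+1) V / (e+1))‖
          + ‖∫ X in V..(V+D), hD r X * (El (e+1) X / (e+1))‖ := norm_sub_le _ _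
      _ ≤ (‖hTest (Real.log (V+D)) r * (El (e+1) (V+D) / (e+1))‖
          + ‖hTest (Real.log V) r * (El (e+1) V / (e+1))‖)
          + ‖∫ X in V..(V+D), hD r X * (El (e+1) X / (e+1))‖ := by
            gcongr
            exact norm_sub_le _ _
      _ ≤ 16*V*(4*V^2/‖e+1‖) + 8*V*(4*V^2/‖e+1‖) + 8*(4*V^2/‖e+1‖)*D :=
            add_le_add (add_le_add hb ha) hi
  have hVe : 16*V*(4*V^2/‖e+1‖) + 8*V*(4*V^2/‖e+1‖) + 8*(4*V^2/‖e+1‖)*D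
      ≤ 128 * V^3 / ‖e+1‖ := by
    have hnum : 16*V*(4*V^2) + 8*V*(4*V^2) + 8*(4*V^2)*D ≤ 128*V^3 := by nlinarith
    calc 16*V*(4*V^2/‖e+1‖) + 8*V*(4*V^2/‖e+1‖) + 8*(4*V^2/‖e+1‖)*D
        = (16*V*(4*V^2) + 8*V*(4*V^2) + 8*(4*V^2)*D)/‖e+1‖ := by ring
      _ ≤ 128 * V^3 / ‖e+1‖ := by gcongr
  have hnim : |e.im| ≤ ‖e+1‖ := by
    calc |e.im| = |(e+1).im| := by simp
      _ ≤ ‖e+1‖ := Complex.abs_im_le_norm _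
  have hfinal : 128 * V^3 / ‖e+1‖ ≤ 256 * V^3 * (1+|e.im|)⁻¹ := by
    have hV3 : (0:ℝ) < V^3 := by positivity
    have himpos : (0:ℝ) < |e.im| := by linarith
    have h0 : (0:ℝ) < 1 + |e.im| := by positivity
    have hmul : (1 + |e.im|)⁻¹ * (1 + |e.im|) = 1 := inv_mul_cancel₀ (ne_of_gt h0)
    have hkey : (1/2 : ℝ) ≤ (1 + |e.im|)⁻¹ * |e.im| := by nlinarith
    calc 128 * V^3 / ‖e+1‖ ≤ 128 * V^3 / |e.im| := by gcongr
      _ ≤ 256 * V^3 * (1+|e.im|)⁻¹ := by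
          rw [div_le_iff₀ himpos]
          nlinarith
  linarith [le_trans horder hVe]

/-! ### bounds on integrals against `gg` -/

lemma hgg_intble {V D : ℝ} (hV : 1 ≤ V) (hD0 : 0 < D) (hDV : D ≤ V) (r : ℝ) (d : ℂ) :
    IntervalIntegrable (fun X => hTest (Real.log X) r * gg d X) volume V (V+D) := by
  have hsub := uIcc_sub hV hD0 hDV
  have hpos : ∀ x ∈ Set.uIcc V (V+D), (0:ℝ) < x := fun x hx => by linarith [(hsub hx).1]
  exact ((hTest_contOn r hpos).mul (gg_contOn d hpos)).intervalIntegrable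

lemma hEl_intble {V D : ℝ} (hV : 1 ≤ V) (hD0 : 0 < D) (hDV : D ≤ V) (r : ℝ) (e : ℂ) :
    IntervalIntegrable (fun X => hTest (Real.log X) r * El e X) volume V (V+D) := by
  have hsub := uIcc_sub hV hD0 hDV
  have hpos : ∀ x ∈ Set.uIcc V (V+D), (0:ℝ) < x := fun x hx => by linarith [(hsub hx).1]
  exact ((hTest_contOn r hpos).mul (El_contOn e hpos)).intervalIntegrable

lemma ggEl_intble {V D : ℝ} (hV : 1 ≤ V) (hD0 : 0 < D) (hDV : D ≤ V) (c e : ℂ) :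
    IntervalIntegrable (fun X => gg c X * El e X) volume V (V+D) := by
  have hsub := uIcc_sub hV hD0 hDV
  have hpos : ∀ x ∈ Set.uIcc V (V+D), (0:ℝ) < x := fun x hx => by linarith [(hsub hx).1]
  exact ((gg_contOn c hpos).mul (El_contOn e hpos)).intervalIntegrable

lemma gggg_intble {V D : ℝ} (hV : 1 ≤ V) (hD0 : 0 < D) (hDV : D ≤ V) (c d : ℂ) :
    IntervalIntegrable (fun X => gg c X * gg d X) volume V (V+D) := by
  have hsub := uIcc_sub hV hD0 hDV
  have hpos : ∀ x ∈ Set.uIcc V (V+D), (0:ℝ) < x := fun x hx => by linarith [(hsub hx).1]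
  exact ((gg_contOn c hpos).mul (gg_contOn d hpos)).intervalIntegrable

lemma partsGG {V D : ℝ} (hV : 1 ≤ V) (hD0 : 0 < D) (hDV : D ≤ V) (r : ℝ) {d : ℂ}
    (hdre : |d.re| ≤ 1) (hdim : 1 ≤ |d.im|) :
    ‖∫ X in V..(V+D), hTest (Real.log X) r * gg d X‖
      ≤ 1024 * V^3 * ((1+|d.im|)⁻¹)^2 := by
  have hd0 : d ≠ 0 := by
    intro h
    rw [h] at hdim
    norm_num at hdim
  have hkey : ∀ X : ℝ, hTest (Real.log X) r * gg d X
      = (hTest (Real.log X) r * El d X - hTest (Real.log X) r * El (-d) X) / d := by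
    intro X
    rw [gg]
    ring
  simp_rw [hkey]
  rw [intervalIntegral.integral_div, intervalIntegral.integral_sub
    (hEl_intble hV hD0 hDV r d) (hEl_intble hV hD0 hDV r (-d))]
  rw [norm_div]
  have b1 := parts hV hD0 hDV r (e := d) (by cases abs_le.1 hdre; linarith) hdim
  have b2 := parts hV hD0 hDV r (e := -d) (by have := abs_le.1 hdre; simp; linarith [this.1]) (by simpa using hdim)
  rw [show |(-d).im| = |d.im| by simp] at b2
  have hnd : |d.im| ≤ ‖d‖ := Complex.abs_im_le_norm _
  have himpos : (0:ℝ) < |d.im| := by linarith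
  have hndpos : (0:ℝ) < ‖d‖ := by linarith
  have h0 : (0:ℝ) < 1 + |d.im| := by positivity
  have hmul : (1 + |d.im|)⁻¹ * (1 + |d.im|) = 1 := inv_mul_cancel₀ (ne_of_gt h0)
  have hV3 : (0:ℝ) < V^3 := by positivity
  have hupos : (0:ℝ) < (1 + |d.im|)⁻¹ := inv_pos.2 h0
  have hstep : ‖(∫ X in V..(V+D), hTest (Real.log X) r * El d X)
      - ∫ X in V..(V+D), hTest (Real.log X) r * El (-d) X‖
      ≤ 512 * V^3 * (1+|d.im|)⁻¹ := by
    calc _ ≤ ‖∫ X in V..(V+D), hTest (Real.log X) r * El d X‖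
          + ‖∫ X in V..(V+D), hTest (Real.log X) r * El (-d) X‖ := norm_sub_le _ _
      _ ≤ 256 * V^3 * (1+|d.im|)⁻¹ + 256 * V^3 * (1+|d.im|)⁻¹ := add_le_add b1 b2
      _ = 512 * V^3 * (1+|d.im|)⁻¹ := by ring
  calc _ ≤ (512 * V^3 * (1+|d.im|)⁻¹) / ‖d‖ := by gcongr
    _ ≤ (512 * V^3 * (1+|d.im|)⁻¹) / |d.im| := by
        gcongr
    _ ≤ 1024 * V^3 * ((1+|d.im|)⁻¹)^2 := by
        rw [div_le_iff₀ himpos]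
        have hkey2 : (1/2 : ℝ) ≤ (1 + |d.im|)⁻¹ * |d.im| := by nlinarith
        have hm := mul_le_mul_of_nonneg_left hkey2
          (show (0:ℝ) ≤ 1024*V^3*(1+|d.im|)⁻¹ by positivity)
        nlinarith [hm]

lemma u_anti {a b : ℝ} (h : a ≤ b) (h0 : 0 ≤ a) : (1+b)⁻¹ ≤ (1+a)⁻¹ := by
  have h1 : (0:ℝ) < 1 + a := by linarith
  have h2 : (0:ℝ) < 1 + b := by linarith
  rw [inv_le_inv₀ h2 h1]
  linarith

lemma abs_abs_sub_le_add (x y : ℝ) : |(|x| - |y|)| ≤ |x + y| := by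
  simpa [sub_neg_eq_add] using abs_abs_sub_abs_le_abs_sub x (-y)

lemma intGG {V D : ℝ} (hV : 1 ≤ V) (hD0 : 0 < D) (hDV : D ≤ V) {c d : ℂ}
    (hcre : |c.re| ≤ 1) (hdre : |d.re| ≤ 1) (hc0 : c ≠ 0) (hd0 : d ≠ 0) :
    ‖∫ X in V..(V+D), gg c X * gg d X‖
      ≤ 128 * V^3 * (1 + |(|c.im| - |d.im|)|)⁻¹ * (‖c‖⁻¹ * ‖d‖⁻¹) := by
  have expand : ∀ X : ℝ, gg c X * gg d X
      = (El (c+d) X - El (c + -d) X - El (-c+d) X + El (-c + -d) X)/(c*d) := by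
    intro X
    rw [gg, gg, div_mul_div_comm]
    congr 1
    rw [sub_mul, mul_sub, mul_sub, El_mul, El_mul, El_mul, El_mul]
    ring
  simp_rw [expand]
  rw [intervalIntegral.integral_div]
  rw [intervalIntegral.integral_add
    (((El_intble hV hD0 hDV (c+d)).sub (El_intble hV hD0 hDV (c + -d))).sub
      (El_intble hV hD0 hDV (-c+d))) (El_intble hV hD0 hDV (-c + -d))]
  rw [intervalIntegral.integral_sub
    ((El_intble hV hD0 hDV (c+d)).sub (El_intble hV hD0 hDV (c + -d)))
    (El_intble hV hD0 hDV (-c+d))]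
  rw [intervalIntegral.integral_sub (El_intble hV hD0 hDV (c+d)) (El_intble hV hD0 hDV (c + -d))]
  set U := (1 + |(|c.im| - |d.im|)|)⁻¹ with hU
  have hUb : ∀ e : ℂ, e.re ≤ 2 → |(|c.im| - |d.im|)| ≤ |e.im| →
      ‖∫ X in V..(V+D), El e X‖ ≤ 32 * V^3 * U := by
    intro e hre him
    calc ‖∫ X in V..(V+D), El e X‖ ≤ 32 * V^3 * (1 + |e.im|)⁻¹ :=
        integ_El_min hV hD0 hDV hre
      _ ≤ 32 * V^3 * U := by
          rw [hU]
          have := u_anti him (abs_nonneg _)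
          have hV3 : (0:ℝ) < V^3 := by positivity
          nlinarith
  have hcre' := abs_le.1 hcre
  have hdre' := abs_le.1 hdre
  have b1 := hUb (c+d) (by simp; linarith [hcre'.2, hdre'.2])
    (by simpa using abs_abs_sub_le_add c.im d.im)
  have b2 := hUb (c + -d) (by simp; linarith [hcre'.2, hdre'.1])
    (by simpa [← sub_eq_add_neg] using abs_abs_sub_abs_le_abs_sub c.im d.im)
  have b3 := hUb (-c+d) (by simp; linarith [hcre'.1, hdre'.2])
    (by
      have : ((-c+d).im) = -(c.im - d.im) := by simp; ring
      rw [this, abs_neg]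
      exact abs_abs_sub_abs_le_abs_sub c.im d.im)
  have b4 := hUb (-c + -d) (by simp; linarith [hcre'.1, hdre'.1])
    (by
      have : ((-c + -d).im) = -(c.im + d.im) := by simp; ring
      rw [this, abs_neg]
      exact abs_abs_sub_le_add c.im d.im)
  rw [norm_div]
  have hnum : ‖(((∫ X in V..(V+D), El (c+d) X) - ∫ X in V..(V+D), El (c + -d) X)
      - ∫ X in V..(V+D), El (-c+d) X) + ∫ X in V..(V+D), El (-c + -d) X‖
      ≤ 128 * V^3 * U := by
    calc _ ≤ ‖((∫ X in V..(V+D), El (c+d) X) - ∫ X in V..(V+D), El (c + -d) X)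
          - ∫ X in V..(V+D), El (-c+d) X‖ + ‖∫ X in V..(V+D), El (-c + -d) X‖ := norm_add_le _ _
      _ ≤ (‖(∫ X in V..(V+D), El (c+d) X) - ∫ X in V..(V+D), El (c + -d) X‖
          + ‖∫ X in V..(V+D), El (-c+d) X‖) + ‖∫ X in V..(V+D), El (-c + -d) X‖ := by
          gcongr
          exact norm_sub_le _ _
      _ ≤ ((‖∫ X in V..(V+D), El (c+d) X‖ + ‖∫ X in V..(V+D), El (c + -d) X‖)
          + ‖∫ X in V..(V+D), El (-c+d) X‖) + ‖∫ X in V..(V+D), El (-c + -d) X‖ := by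
          gcongr
          exact norm_sub_le _ _
      _ ≤ ((32 * V^3 * U + 32 * V^3 * U) + 32 * V^3 * U) + 32 * V^3 * U :=
          add_le_add (add_le_add (add_le_add b1 b2) b3) b4
      _ = 128 * V^3 * U := by ring
  calc _ ≤ (128 * V^3 * U) / ‖c * d‖ := by gcongr
    _ = 128 * V^3 * U * (‖c‖⁻¹ * ‖d‖⁻¹) := by
        rw [norm_mul, div_eq_mul_inv, mul_inv]

/-! ### the three cases -/

lemma caseA {V D : ℝ} (hV : 1 ≤ V) (hD0 : 0 < D) (hDV : D ≤ V) (r1 r2 : ℝ) :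
    ‖∫ X in V..(V+D), hTest (Real.log X) r1 * hTest (Real.log X) r2‖ ≤ 256 * V^3 := by
  have hsub := uIcc_sub hV hD0 hDV
  have htriv : ‖∫ X in V..(V+D), hTest (Real.log X) r1 * hTest (Real.log X) r2‖
      ≤ (16*V)*(16*V) * |(V+D) - V| := by
    apply intervalIntegral.norm_integral_le_of_norm_le_const
    intro x hx
    have hx2 := hsub (Set.uIoc_subset_uIcc hx)
    rw [norm_mul]
    have e1 : ‖hTest (Real.log x) r1‖ ≤ 16*V := le_trans (h_norm r1 hx2.1) (by linarith [hx2.2])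
    have e2 : ‖hTest (Real.log x) r2‖ ≤ 16*V := le_trans (h_norm r2 hx2.1) (by linarith [hx2.2])
    exact mul_le_mul e1 e2 (norm_nonneg _) (by positivity)
  rw [show (V+D) - V = D by ring, abs_of_pos hD0] at htriv
  nlinarith [htriv]

lemma caseB {V D : ℝ} (hV : 1 ≤ V) (hD0 : 0 < D) (hDV : D ≤ V) (r1 r2 : ℝ) (hr2 : 1 ≤ |r2|) :
    ‖∫ X in V..(V+D), hTest (Real.log X) r1 * hTest (Real.log X) r2‖
      ≤ 4096 * V^3 * ((1+|r2|)⁻¹)^2 := by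
  have key : ∀ X : ℝ, hTest (Real.log X) r1 * hTest (Real.log X) r2
      = hTest (Real.log X) r1 * gg (1 + Complex.I * r2) X
        + hTest (Real.log X) r1 * gg (1 - Complex.I * r2) X
        - 2 * (hTest (Real.log X) r1 * gg (Complex.I * r2) X) := by
    intro X
    rw [hEq r2 X]
    ring
  simp_rw [key]
  rw [intervalIntegral.integral_sub
    ((hgg_intble hV hD0 hDV r1 _).add (hgg_intble hV hD0 hDV r1 _))
    ((hgg_intble hV hD0 hDV r1 _).const_mul 2)]
  rw [intervalIntegral.integral_add (hgg_intble hV hD0 hDV r1 _) (hgg_intble hV hD0 hDV r1 _)]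
  rw [intervalIntegral.integral_const_mul]
  have b1 := partsGG hV hD0 hDV r1 (d := 1 + Complex.I * r2) (by simp) (by simpa using hr2)
  have b2 := partsGG hV hD0 hDV r1 (d := 1 - Complex.I * r2) (by simp) (by simpa using hr2)
  have b3 := partsGG hV hD0 hDV r1 (d := Complex.I * r2) (by simp) (by simpa using hr2)
  rw [show ((1 + Complex.I * (r2:ℂ)).im) = r2 by simp] at b1
  rw [show ((1 - Complex.I * (r2:ℂ)).im) = -r2 by simp, abs_neg] at b2
  rw [show ((Complex.I * (r2:ℂ)).im) = r2 by simp] at b3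
  calc _ ≤ ‖(∫ X in V..(V+D), hTest (Real.log X) r1 * gg (1 + Complex.I * r2) X)
        + ∫ X in V..(V+D), hTest (Real.log X) r1 * gg (1 - Complex.I * r2) X‖
        + ‖(2:ℂ)‖ * ‖∫ X in V..(V+D), hTest (Real.log X) r1 * gg (Complex.I * r2) X‖ := by
        rw [← norm_mul]
        exact norm_sub_le _ _
    _ ≤ (‖∫ X in V..(V+D), hTest (Real.log X) r1 * gg (1 + Complex.I * r2) X‖
        + ‖∫ X in V..(V+D), hTest (Real.log X) r1 * gg (1 - Complex.I * r2) X‖)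
        + ‖(2:ℂ)‖ * ‖∫ X in V..(V+D), hTest (Real.log X) r1 * gg (Complex.I * r2) X‖ := by
        gcongr
        exact norm_add_le _ _
    _ ≤ (1024 * V^3 * ((1+|r2|)⁻¹)^2 + 1024 * V^3 * ((1+|r2|)⁻¹)^2)
        + 2 * (1024 * V^3 * ((1+|r2|)⁻¹)^2) := by
        rw [Complex.norm_ofNat]
        exact add_le_add (add_le_add b1 b2)
          (mul_le_mul_of_nonneg_left b3 (by norm_num))
    _ = 4096 * V^3 * ((1+|r2|)⁻¹)^2 := by ring

lemma inv_norm_le {r : ℝ} {c : ℂ} (hr : 1 ≤ |r|) (him : |c.im| = |r|) :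
    ‖c‖⁻¹ ≤ 2*(1+|r|)⁻¹ := by
  have h1 : |r| ≤ ‖c‖ := him ▸ Complex.abs_im_le_norm c
  have hrpos : (0:ℝ) < |r| := by linarith
  have hcpos : (0:ℝ) < ‖c‖ := by linarith
  have e1 : ‖c‖⁻¹ ≤ |r|⁻¹ := by
    rw [inv_le_inv₀ hcpos hrpos]
    exact h1
  have e2 : |r|⁻¹ ≤ 2*(1+|r|)⁻¹ := by
    rw [show (2:ℝ)*(1+|r|)⁻¹ = ((1+|r|)/2)⁻¹ by
      rw [div_eq_mul_inv, mul_inv]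
      norm_num
      ring]
    rw [inv_le_inv₀ hrpos (by positivity)]
    linarith
  linarith

lemma caseC_hgg {V D : ℝ} (hV : 1 ≤ V) (hD0 : 0 < D) (hDV : D ≤ V) (r1 r2 : ℝ)
    (hr1 : 1 ≤ |r1|) (hr2 : 1 ≤ |r2|) {d : ℂ}
    (hdre : |d.re| ≤ 1) (hdim : |d.im| = |r2|) :
    ‖∫ X in V..(V+D), hTest (Real.log X) r1 * gg d X‖
      ≤ 2048 * V^3 * ((1+|r1|)⁻¹ * (1+|r2|)⁻¹ * (1+|(|r1|-|r2|)|)⁻¹) := by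
  have hd0 : d ≠ 0 := by
    intro h
    rw [h] at hdim
    simp at hdim
    rw [← hdim] at hr2
    norm_num at hr2
  have hdb : ‖d‖⁻¹ ≤ 2*(1+|r2|)⁻¹ := inv_norm_le hr2 hdim
  have hterm : ∀ c : ℂ, |c.re| ≤ 1 → |c.im| = |r1| →
      ‖∫ X in V..(V+D), gg c X * gg d X‖
        ≤ 512 * V^3 * ((1+|r1|)⁻¹ * (1+|r2|)⁻¹ * (1+|(|r1|-|r2|)|)⁻¹) := by
    intro c hcre hcim
    have hc0 : c ≠ 0 := by
      intro h
      rw [h] at hcim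
      simp at hcim
      rw [← hcim] at hr1
      norm_num at hr1
    have hcb : ‖c‖⁻¹ ≤ 2*(1+|r1|)⁻¹ := inv_norm_le hr1 hcim
    have := intGG hV hD0 hDV hcre hdre hc0 hd0
    rw [hcim, hdim] at this
    have hV3 : (0:ℝ) < V^3 := by positivity
    have hu3 : (0:ℝ) < (1+|(|r1|-|r2|)|)⁻¹ := by positivity
    calc ‖∫ X in V..(V+D), gg c X * gg d X‖
        ≤ 128 * V^3 * (1 + |(|r1| - |r2|)|)⁻¹ * (‖c‖⁻¹ * ‖d‖⁻¹) := this
      _ ≤ 128 * V^3 * (1 + |(|r1| - |r2|)|)⁻¹ * ((2*(1+|r1|)⁻¹) * (2*(1+|r2|)⁻¹)) := by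
          gcongr
      _ = 512 * V^3 * ((1+|r1|)⁻¹ * (1+|r2|)⁻¹ * (1+|(|r1|-|r2|)|)⁻¹) := by ring
  have key : ∀ X : ℝ, hTest (Real.log X) r1 * gg d X
      = gg (1 + Complex.I * r1) X * gg d X + gg (1 - Complex.I * r1) X * gg d X
        - 2 * (gg (Complex.I * r1) X * gg d X) := by
    intro X
    rw [hEq r1 X]
    ring
  simp_rw [key]
  rw [intervalIntegral.integral_sub
    ((gggg_intble hV hD0 hDV _ _).add (gggg_intble hV hD0 hDV _ _))
    ((gggg_intble hV hD0 hDV _ _).const_mul 2)]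
  rw [intervalIntegral.integral_add (gggg_intble hV hD0 hDV _ _) (gggg_intble hV hD0 hDV _ _)]
  rw [intervalIntegral.integral_const_mul]
  have b1 := hterm (1 + Complex.I * r1) (by simp) (by simp)
  have b2 := hterm (1 - Complex.I * r1) (by simp) (by simp)
  have b3 := hterm (Complex.I * r1) (by simp) (by simp)
  calc _ ≤ ‖(∫ X in V..(V+D), gg (1 + Complex.I * r1) X * gg d X)
        + ∫ X in V..(V+D), gg (1 - Complex.I * r1) X * gg d X‖
        + ‖(2:ℂ)‖ * ‖∫ X in V..(V+D), gg (Complex.I * r1) X * gg d X‖ := by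
        rw [← norm_mul]
        exact norm_sub_le _ _
    _ ≤ (‖∫ X in V..(V+D), gg (1 + Complex.I * r1) X * gg d X‖
        + ‖∫ X in V..(V+D), gg (1 - Complex.I * r1) X * gg d X‖)
        + ‖(2:ℂ)‖ * ‖∫ X in V..(V+D), gg (Complex.I * r1) X * gg d X‖ := by
        gcongr
        exact norm_add_le _ _
    _ ≤ (512 * V^3 * ((1+|r1|)⁻¹ * (1+|r2|)⁻¹ * (1+|(|r1|-|r2|)|)⁻¹)
        + 512 * V^3 * ((1+|r1|)⁻¹ * (1+|r2|)⁻¹ * (1+|(|r1|-|r2|)|)⁻¹))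
        + 2 * (512 * V^3 * ((1+|r1|)⁻¹ * (1+|r2|)⁻¹ * (1+|(|r1|-|r2|)|)⁻¹)) := by
        rw [Complex.norm_ofNat]
        exact add_le_add (add_le_add b1 b2)
          (mul_le_mul_of_nonneg_left b3 (by norm_num))
    _ = 2048 * V^3 * ((1+|r1|)⁻¹ * (1+|r2|)⁻¹ * (1+|(|r1|-|r2|)|)⁻¹) := by ring

lemma caseC {V D : ℝ} (hV : 1 ≤ V) (hD0 : 0 < D) (hDV : D ≤ V) (r1 r2 : ℝ)
    (hr1 : 1 ≤ |r1|) (hr2 : 1 ≤ |r2|) :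
    ‖∫ X in V..(V+D), hTest (Real.log X) r1 * hTest (Real.log X) r2‖
      ≤ 8192 * V^3 * ((1+|r1|)⁻¹ * (1+|r2|)⁻¹ * (1+|(|r1|-|r2|)|)⁻¹) := by
  have key : ∀ X : ℝ, hTest (Real.log X) r1 * hTest (Real.log X) r2
      = hTest (Real.log X) r1 * gg (1 + Complex.I * r2) X
        + hTest (Real.log X) r1 * gg (1 - Complex.I * r2) X
        - 2 * (hTest (Real.log X) r1 * gg (Complex.I * r2) X) := by
    intro X
    rw [hEq r2 X]
    ring
  simp_rw [key]
  rw [intervalIntegral.integral_sub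
    ((hgg_intble hV hD0 hDV r1 _).add (hgg_intble hV hD0 hDV r1 _))
    ((hgg_intble hV hD0 hDV r1 _).const_mul 2)]
  rw [intervalIntegral.integral_add (hgg_intble hV hD0 hDV r1 _) (hgg_intble hV hD0 hDV r1 _)]
  rw [intervalIntegral.integral_const_mul]
  have b1 := caseC_hgg hV hD0 hDV r1 r2 hr1 hr2 (d := 1 + Complex.I * r2) (by simp) (by simp)
  have b2 := caseC_hgg hV hD0 hDV r1 r2 hr1 hr2 (d := 1 - Complex.I * r2) (by simp) (by simp)
  have b3 := caseC_hgg hV hD0 hDV r1 r2 hr1 hr2 (d := Complex.I * r2) (by simp) (by simp)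
  calc _ ≤ ‖(∫ X in V..(V+D), hTest (Real.log X) r1 * gg (1 + Complex.I * r2) X)
        + ∫ X in V..(V+D), hTest (Real.log X) r1 * gg (1 - Complex.I * r2) X‖
        + ‖(2:ℂ)‖ * ‖∫ X in V..(V+D), hTest (Real.log X) r1 * gg (Complex.I * r2) X‖ := by
        rw [← norm_mul]
        exact norm_sub_le _ _
    _ ≤ (‖∫ X in V..(V+D), hTest (Real.log X) r1 * gg (1 + Complex.I * r2) X‖
        + ‖∫ X in V..(V+D), hTest (Real.log X) r1 * gg (1 - Complex.I * r2) X‖)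
        + ‖(2:ℂ)‖ * ‖∫ X in V..(V+D), hTest (Real.log X) r1 * gg (Complex.I * r2) X‖ := by
        gcongr
        exact norm_add_le _ _
    _ ≤ (2048 * V^3 * ((1+|r1|)⁻¹ * (1+|r2|)⁻¹ * (1+|(|r1|-|r2|)|)⁻¹)
        + 2048 * V^3 * ((1+|r1|)⁻¹ * (1+|r2|)⁻¹ * (1+|(|r1|-|r2|)|)⁻¹))
        + 2 * (2048 * V^3 * ((1+|r1|)⁻¹ * (1+|r2|)⁻¹ * (1+|(|r1|-|r2|)|)⁻¹)) := by
        rw [Complex.norm_ofNat]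
        exact add_le_add (add_le_add b1 b2)
          (mul_le_mul_of_nonneg_left b3 (by norm_num))
    _ = 8192 * V^3 * ((1+|r1|)⁻¹ * (1+|r2|)⁻¹ * (1+|(|r1|-|r2|)|)⁻¹) := by ring

/-! ### assembly -/

lemma uB {r1 r2 : ℝ} (h1 : |r1| ≤ 1) :
    ((1+|r2|)⁻¹)^2 ≤ 4*((1+|r1|)⁻¹ * (1+|r2|)⁻¹ * (1+|(|r1|-|r2|)|)⁻¹) := by
  have ha : (0:ℝ) ≤ |r1| := abs_nonneg _
  have hb : (0:ℝ) ≤ |r2| := abs_nonneg _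
  have hu1 : (1/2:ℝ) ≤ (1+|r1|)⁻¹ := by
    have := u_anti h1 ha
    norm_num at this
    linarith
  have ht : |(|r1| - |r2|)| ≤ 1 + |r2| := abs_le.mpr ⟨by linarith, by linarith⟩
  have h3 : 2⁻¹ * (1+|r2|)⁻¹ ≤ (1+|(|r1|-|r2|)|)⁻¹ := by
    rw [← mul_inv]
    rw [inv_le_inv₀ (by positivity) (by positivity)]
    linarith
  have hu2 : (0:ℝ) ≤ (1+|r2|)⁻¹ := by positivity
  have hu3 : (0:ℝ) ≤ (1+|(|r1|-|r2|)|)⁻¹ := by positivity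
  have s1 : (1+|r2|)⁻¹ * (2⁻¹ * (1+|r2|)⁻¹) ≤ (1+|r2|)⁻¹ * (1+|(|r1|-|r2|)|)⁻¹ :=
    mul_le_mul_of_nonneg_left h3 hu2
  have s2 : (1/2) * ((1+|r2|)⁻¹ * (1+|(|r1|-|r2|)|)⁻¹)
      ≤ (1+|r1|)⁻¹ * ((1+|r2|)⁻¹ * (1+|(|r1|-|r2|)|)⁻¹) :=
    mul_le_mul_of_nonneg_right hu1 (by positivity)
  nlinarith [s1, s2]

lemma main_bound {V D : ℝ} (hV : 1 ≤ V) (hD0 : 0 < D) (hDV : D ≤ V) (r1 r2 : ℝ) :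
    ‖∫ X in V..(V+D), hTest (Real.log X) r1 * hTest (Real.log X) r2‖
      ≤ 65536 * V^3 * ((1+|r1|)⁻¹ * (1+|r2|)⁻¹ * (1+|(|r1|-|r2|)|)⁻¹) := by
  have hV3 : (0:ℝ) < V^3 := by positivity
  have hu1 : (0:ℝ) < (1+|r1|)⁻¹ := by positivity
  have hu2 : (0:ℝ) < (1+|r2|)⁻¹ := by positivity
  have hu3 : (0:ℝ) < (1+|(|r1|-|r2|)|)⁻¹ := by positivity
  rcases le_or_gt |r1| 1 with h1 | h1 <;> rcases le_or_gt |r2| 1 with h2 | h2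
  · -- both small
    have hA := caseA hV hD0 hDV r1 r2
    have e1 : (1/2:ℝ) ≤ (1+|r1|)⁻¹ := by
      have := u_anti h1 (abs_nonneg _); norm_num at this; linarith
    have e2 : (1/2:ℝ) ≤ (1+|r2|)⁻¹ := by
      have := u_anti h2 (abs_nonneg _); norm_num at this; linarith
    have e3 : (1/2:ℝ) ≤ (1+|(|r1|-|r2|)|)⁻¹ := by
      have habs : |(|r1| - |r2|)| ≤ 1 :=
        abs_le.mpr ⟨by linarith [abs_nonneg r1, abs_nonneg r2], by linarith [abs_nonneg r2]⟩
      have := u_anti habs (abs_nonneg _); norm_num at this; linarith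
    have e12 : (1/4:ℝ) ≤ (1+|r1|)⁻¹ * (1+|r2|)⁻¹ := by nlinarith
    have e123 : (1/8:ℝ) ≤ (1+|r1|)⁻¹ * (1+|r2|)⁻¹ * (1+|(|r1|-|r2|)|)⁻¹ := by nlinarith
    have hm := mul_le_mul_of_nonneg_left e123 (show (0:ℝ) ≤ 65536*V^3 by positivity)
    linarith [hm, hA, hV3]
  · -- r1 small, r2 big
    have hb := caseB hV hD0 hDV r1 r2 (le_of_lt h2)
    have hm := mul_le_mul_of_nonneg_left (uB (r2 := r2) h1)
      (show (0:ℝ) ≤ 4096*V^3 by positivity)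
    have hp : (0:ℝ) ≤ V^3 * ((1+|r1|)⁻¹ * (1+|r2|)⁻¹ * (1+|(|r1|-|r2|)|)⁻¹) := by positivity
    nlinarith [hb, hm, hp]
  · -- r1 big, r2 small
    have hcomm : (∫ X in V..(V+D), hTest (Real.log X) r1 * hTest (Real.log X) r2)
        = ∫ X in V..(V+D), hTest (Real.log X) r2 * hTest (Real.log X) r1 := by
      simp_rw [mul_comm]
    rw [hcomm]
    have hb := caseB hV hD0 hDV r2 r1 (le_of_lt h1)
    have huB := uB (r1 := r2) (r2 := r1) h2
    rw [show |(|r2| - |r1|)| = |(|r1| - |r2|)| from abs_sub_comm _ _] at huB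
    have hm := mul_le_mul_of_nonneg_left huB (show (0:ℝ) ≤ 4096*V^3 by positivity)
    have hp : (0:ℝ) ≤ V^3 * ((1+|r2|)⁻¹ * (1+|r1|)⁻¹ * (1+|(|r1|-|r2|)|)⁻¹) := by positivity
    nlinarith [hb, hm, hp]
  · -- both big
    have hc := caseC hV hD0 hDV r1 r2 (le_of_lt h1) (le_of_lt h2)
    have hp : (0:ℝ) < V^3 * ((1+|r1|)⁻¹ * (1+|r2|)⁻¹ * (1+|(|r1|-|r2|)|)⁻¹) := by positivity
    nlinarith [hc, hp]

theorem stmt_3 :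
    ∃ C : ℝ, 0 < C ∧ ∀ (r1 r2 V D : ℝ), 1 < D → D ≤ V →
      ‖(1 / D : ℂ) * ∫ X in V..(V + D), hTest (Real.log X) r1 * hTest (Real.log X) r2‖
        ≤ C * (V ^ 3 / D) * (1 + |r1|)⁻¹ * (1 + |r2|)⁻¹ * (1 + |(|r1| - |r2|)|)⁻¹ := by
  refine ⟨65536, by norm_num, ?_⟩
  intro r1 r2 V D hD1 hDV
  have hD0 : (0:ℝ) < D := by linarith
  have hV : (1:ℝ) ≤ V := by linarith
  have habs : ‖(1 / D : ℂ)
      * ∫ X in V..(V + D), hTest (Real.log X) r1 * hTest (Real.log X) r2‖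
      = (1/D) * ‖∫ X in V..(V + D), hTest (Real.log X) r1 * hTest (Real.log X) r2‖ := by
    rw [norm_mul]
    congr 1
    rw [norm_div, norm_one]
    rw [Complex.norm_real, Real.norm_eq_abs, abs_of_pos hD0]
  rw [habs]
  have hmain := main_bound hV hD0 hDV r1 r2
  calc (1/D) * ‖∫ X in V..(V + D), hTest (Real.log X) r1 * hTest (Real.log X) r2‖
      ≤ (1/D) * (65536 * V^3 * ((1+|r1|)⁻¹ * (1+|r2|)⁻¹ * (1+|(|r1|-|r2|)|)⁻¹)) := by
        apply mul_le_mul_of_nonneg_left hmain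
        positivity
    _ = 65536 * (V ^ 3 / D) * (1 + |r1|)⁻¹ * (1 + |r2|)⁻¹ * (1 + |(|r1| - |r2|)|)⁻¹ := by
        ring
end

section
/- There is a constant C such that for all Q ≥ 1 and all 0 < η ≤ 1/2, Σ 1/|cos(arg c)| ≤ C·Q²·log(1/η), where the sum is over Gaussian integers c with Q ≤ |c| ≤ 2Q and |cos(arg c)| ≥ η. -/
open Finset

set_option maxHeartbeats 1000000 in
theorem stmt_12 :
    ∃ C : ℝ, ∀ Q η : ℝ, 1 ≤ Q → 0 < η → η ≤ 1 / 2 →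
      (∑ᶠ c : GaussianInt,
          if Q ≤ ‖GaussianInt.toComplex c‖ ∧
              ‖GaussianInt.toComplex c‖ ≤ 2 * Q ∧
              η ≤ |Real.cos (Complex.arg (GaussianInt.toComplex c))| then
            1 / |Real.cos (Complex.arg (GaussianInt.toComplex c))|
          else 0)
        ≤ C * Q ^ 2 * Real.log (1 / η) := by
  use 100
  intro Q η hQ hη hη2
  have hQ0 : (0:ℝ) < Q := lt_of_lt_of_le one_pos hQ
  set L : ℝ := Real.log (1 / η) with hLdef
  have hL2 : Real.log 2 ≤ L := by
    apply Real.log_le_log (by norm_num)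
    rw [le_div_iff₀ hη]; linarith
  have hlog2 : (0.6931471803 : ℝ) < Real.log 2 := Real.log_two_gt_d9
  have hL0 : 0 < L := by linarith
  -- the summand
  set F : GaussianInt → ℝ := fun c =>
    if Q ≤ ‖GaussianInt.toComplex c‖ ∧
        ‖GaussianInt.toComplex c‖ ≤ 2 * Q ∧
        η ≤ |Real.cos (Complex.arg (GaussianInt.toComplex c))| then
      1 / |Real.cos (Complex.arg (GaussianInt.toComplex c))|
    else 0 with hF
  clear_value F
  -- integer bounds
  set M : ℤ := ⌊2 * Q⌋ with hMdef
  have hM2 : 2 ≤ M := by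
    rw [hMdef]; exact Int.le_floor.mpr (by push_cast; linarith)
  have hM0 : 0 ≤ M := by omega
  have hMle : (M : ℝ) ≤ 2 * Q := Int.floor_le _
  set N : ℕ := M.toNat with hNdef
  have hNM : (N : ℤ) = M := Int.toNat_of_nonneg hM0
  clear_value M N
  have hNle : (N : ℝ) ≤ 2 * Q := by
    calc (N : ℝ) = ((N : ℤ) : ℝ) := by push_cast; rfl
      _ = (M : ℝ) := by rw [hNM]
      _ ≤ 2 * Q := hMle
  -- support of F
  have hre : ∀ c : GaussianInt, (GaussianInt.toComplex c).re = (c.re : ℝ) := by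
    intro c; rw [GaussianInt.toComplex_def]; simp
  have him : ∀ c : GaussianInt, (GaussianInt.toComplex c).im = (c.im : ℝ) := by
    intro c; rw [GaussianInt.toComplex_def]; simp
  have hF0 : ∀ c : GaussianInt, F c ≠ 0 → |c.re| ≤ M ∧ |c.im| ≤ M := by
    intro c hc
    by_cases h : Q ≤ ‖GaussianInt.toComplex c‖ ∧
        ‖GaussianInt.toComplex c‖ ≤ 2 * Q ∧
        η ≤ |Real.cos (Complex.arg (GaussianInt.toComplex c))|
    · obtain ⟨h1, h2, h3⟩ := h
      constructor
      · rw [hMdef]; apply Int.le_floor.mpr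
        have := Complex.abs_re_le_norm (GaussianInt.toComplex c)
        rw [hre c] at this
        push_cast; linarith
      · rw [hMdef]; apply Int.le_floor.mpr
        have := Complex.abs_im_le_norm (GaussianInt.toComplex c)
        rw [him c] at this
        push_cast; linarith
    · exact absurd (by rw [hF]; simp only [if_neg h]) hc
  set S : Finset GaussianInt :=
    ((Finset.Icc (-M) M) ×ˢ (Finset.Icc (-M) M)).image
      (fun p : ℤ × ℤ => (⟨p.1, p.2⟩ : GaussianInt)) with hS
  clear_value S
  have hsupp : Function.support F ⊆ (S : Set GaussianInt) := by
    intro c hc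
    obtain ⟨h1, h2⟩ := hF0 c hc
    rw [hS]
    simp only [Finset.coe_image, Set.mem_image, Finset.mem_coe, Finset.mem_product,
      Finset.mem_Icc]
    rw [abs_le] at h1 h2
    exact ⟨(c.re, c.im), ⟨⟨h1.1, h1.2⟩, ⟨h2.1, h2.2⟩⟩, rfl⟩
  rw [finsum_eq_sum_of_support_subset F hsupp, hS]
  rw [Finset.sum_image (fun x _ y _ h => by
    injection h with h1 h2; exact Prod.ext h1 h2)]
  rw [Finset.sum_product]
  -- the dominating function of the real part
  set g : ℤ → ℝ := fun a => if η * Q ≤ |(a : ℝ)| ∧ a ≠ 0 then 2 * Q / |(a : ℝ)| else 0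
    with hg
  clear_value g
  have hg0 : ∀ a : ℤ, 0 ≤ g a := by
    intro a; rw [hg]; dsimp only; split
    · positivity
    · exact le_rfl
  have key : ∀ a b : ℤ, F ⟨a, b⟩ ≤ g a := by
    intro a b
    by_cases h : Q ≤ ‖GaussianInt.toComplex ⟨a, b⟩‖ ∧
        ‖GaussianInt.toComplex ⟨a, b⟩‖ ≤ 2 * Q ∧
        η ≤ |Real.cos (Complex.arg (GaussianInt.toComplex ⟨a, b⟩))|
    · obtain ⟨h1, h2, h3⟩ := h
      set z := GaussianInt.toComplex ⟨a, b⟩ with hz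
      have hzre : z.re = (a : ℝ) := by rw [hz, hre]
      have habs : 0 < ‖z‖ := lt_of_lt_of_le hQ0 h1
      have hzne : z ≠ 0 := by
        intro h0; rw [h0] at habs; simp at habs
      have hcos : |Real.cos z.arg| = |(a : ℝ)| / ‖z‖ := by
        rw [Complex.cos_arg hzne, abs_div, hzre,
          abs_of_nonneg (norm_nonneg z)]
      have ha' : η * Q ≤ |(a : ℝ)| := by
        rw [hcos, le_div_iff₀ habs] at h3
        calc η * Q ≤ η * ‖z‖ := by
              exact mul_le_mul_of_nonneg_left h1 hη.le
          _ ≤ |(a : ℝ)| := h3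
      have ha0 : a ≠ 0 := by
        intro h0
        rw [h0] at ha'
        simp at ha'
        nlinarith
      have hapos : (0:ℝ) < |(a : ℝ)| := lt_of_lt_of_le (by positivity) ha'
      rw [hF]; dsimp only
      rw [if_pos ⟨h1, h2, h3⟩, hg]; dsimp only
      rw [if_pos ⟨ha', ha0⟩, hcos, one_div_div]
      exact (div_le_div_iff_of_pos_right hapos).mpr h2
    · rw [hF]; dsimp only; rw [if_neg h]; exact hg0 a
  -- bound each inner sum
  have hcard : ((Finset.Icc (-M) M).card : ℝ) ≤ 5 * Q := by
    rw [Int.card_Icc]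
    have h1 : (M + 1 - -M).toNat = (2 * M + 1).toNat := by omega
    rw [h1]
    have h2 : ((2 * M + 1).toNat : ℝ) = 2 * (M : ℝ) + 1 := by
      have : ((2 * M + 1).toNat : ℤ) = 2 * M + 1 := Int.toNat_of_nonneg (by omega)
      exact_mod_cast congrArg (fun z : ℤ => (z : ℝ)) this
    rw [h2]; linarith
  have hinner : ∀ a : ℤ, ∑ b ∈ Finset.Icc (-M) M, F ⟨a, b⟩ ≤ 5 * Q * g a := by
    intro a
    calc ∑ b ∈ Finset.Icc (-M) M, F ⟨a, b⟩
        ≤ (Finset.Icc (-M) M).card • g a :=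
          Finset.sum_le_card_nsmul _ _ _ (fun b _ => key a b)
      _ = ((Finset.Icc (-M) M).card : ℝ) * g a := nsmul_eq_mul _ _
      _ ≤ 5 * Q * g a := mul_le_mul_of_nonneg_right hcard (hg0 a)
  -- symmetrize the outer sum
  have hgneg : ∀ a : ℤ, g (-a) = g a := by
    intro a
    simp only [hg, Int.cast_neg, abs_neg, neg_ne_zero]
  have hg00 : g 0 = 0 := by rw [hg]; simp
  have hsplit : Finset.Icc (-M) M = Finset.Icc (-M) (-1) ∪ Finset.Icc 0 M := by
    ext x; simp only [Finset.mem_Icc, Finset.mem_union]; omega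
  have hdisj : Disjoint (Finset.Icc (-M) (-1)) (Finset.Icc (0:ℤ) M) := by
    rw [Finset.disjoint_left]
    intro x hx hx'
    simp only [Finset.mem_Icc] at hx hx'
    omega
  have hneg_sum : ∑ a ∈ Finset.Icc (-M) (-1), g a = ∑ a ∈ Finset.Icc 1 M, g a := by
    refine Finset.sum_nbij' (fun a => -a) (fun a => -a) ?_ ?_ ?_ ?_ ?_
    · intro a ha; simp only [Finset.mem_Icc] at *; omega
    · intro a ha; simp only [Finset.mem_Icc] at *; omega
    · intro a _; ring
    · intro a _; ring
    · intro a _; rw [← hgneg a]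
  have hIcc0 : Finset.Icc (0:ℤ) M = insert 0 (Finset.Icc 1 M) := by
    ext x; simp only [Finset.mem_Icc, Finset.mem_insert]; omega
  have houter : ∑ a ∈ Finset.Icc (-M) M, g a = 2 * ∑ a ∈ Finset.Icc 1 M, g a := by
    rw [hsplit, Finset.sum_union hdisj, hneg_sum, hIcc0,
      Finset.sum_insert (by simp), hg00]
    ring
  -- reindex Icc 1 M to naturals
  have hnat : ∑ a ∈ Finset.Icc (1:ℤ) M, g a = ∑ i ∈ Finset.Icc 1 N, g (i : ℤ) := by
    refine Finset.sum_nbij' (fun a => a.toNat) (fun i => (i : ℤ)) ?_ ?_ ?_ ?_ ?_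
    · intro a ha
      simp only [Finset.mem_Icc] at ha ⊢
      (try dsimp only)
      omega
    · intro i hi
      simp only [Finset.mem_Icc] at hi ⊢
      (try dsimp only)
      omega
    · intro a ha
      simp only [Finset.mem_Icc] at ha
      (try dsimp only)
      omega
    · intro i hi
      simp only [Finset.mem_Icc] at hi
      (try dsimp only)
      omega
    · intro a ha
      simp only [Finset.mem_Icc] at ha
      (try dsimp only)
      congr 1
      omega
  -- bound the natural-indexed sum by a harmonic tail
  set A : ℕ := max 1 ⌈η * Q⌉₊ with hAdef
  have hA1 : 1 ≤ A := le_max_left _ _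
  have hterm : ∀ i ∈ Finset.Icc 1 N, g (i : ℤ) ≤
      2 * Q * (if A ≤ i then 1 / (i : ℝ) else 0) := by
    intro i hi
    simp only [Finset.mem_Icc] at hi
    by_cases hc : η * Q ≤ |((i : ℤ) : ℝ)| ∧ (i : ℤ) ≠ 0
    · have habsi : |((i : ℤ) : ℝ)| = (i : ℝ) := by
        push_cast; exact abs_of_nonneg (Nat.cast_nonneg i)
      have hAi : A ≤ i := by
        apply max_le hi.1
        apply Nat.ceil_le.mpr
        rw [habsi] at hc
        exact hc.1
      rw [hg]; dsimp only
      rw [if_pos hc, if_pos hAi, habsi, mul_one_div]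
    · rw [hg]; dsimp only; rw [if_neg hc]
      split
      · positivity
      · simp
  have hfilter : Finset.filter (fun i => A ≤ i) (Finset.Icc 1 N) = Finset.Icc A N := by
    ext i; simp only [Finset.mem_filter, Finset.mem_Icc]; omega
  have hsum_ite : ∑ i ∈ Finset.Icc 1 N, (if A ≤ i then 1 / (i : ℝ) else 0)
      = ∑ i ∈ Finset.Icc A N, 1 / (i : ℝ) := by
    rw [← Finset.sum_filter, hfilter]
  -- harmonic tail bound
  have harm_bound : ∑ i ∈ Finset.Icc A N, (1 / (i : ℝ)) ≤ 4 * L := by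
    by_cases hAN : A ≤ N
    · have hharm : ∀ n : ℕ, (harmonic n : ℝ) = ∑ i ∈ Finset.Icc 1 n, (1 / (i : ℝ)) := by
        intro n
        rw [harmonic_eq_sum_Icc]
        push_cast
        simp [one_div]
      have hsplit2 : Finset.Icc 1 N = Finset.Icc 1 (A - 1) ∪ Finset.Icc A N := by
        ext i; simp only [Finset.mem_Icc, Finset.mem_union]; omega
      have hdisj2 : Disjoint (Finset.Icc 1 (A - 1)) (Finset.Icc A N) := by
        rw [Finset.disjoint_left]
        intro i hi hi'
        simp only [Finset.mem_Icc] at hi hi'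
        omega
      have heq : ∑ i ∈ Finset.Icc A N, (1 / (i : ℝ))
          = (harmonic N : ℝ) - (harmonic (A - 1) : ℝ) := by
        rw [hharm N, hharm (A - 1), hsplit2, Finset.sum_union hdisj2]
        ring
      rw [heq]
      have hub : (harmonic N : ℝ) ≤ 1 + Real.log N := harmonic_le_one_add_log N
      have hlb : Real.log ((A - 1 : ℕ) + 1 : ℕ) ≤ (harmonic (A - 1) : ℝ) :=
        log_add_one_le_harmonic (A - 1)
      have hAA : ((A - 1 : ℕ) + 1 : ℕ) = A := by omega
      rw [hAA] at hlb
      -- log N ≤ log 2 + log A + L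
      have hApos : (0:ℝ) < A := by exact_mod_cast hA1
      have hNpos : (0:ℝ) < N := lt_of_lt_of_le hApos (by exact_mod_cast hAN)
      have hNA : η * (N : ℝ) ≤ 2 * A := by
        have h1 : η * (N : ℝ) ≤ η * (2 * Q) := mul_le_mul_of_nonneg_left hNle hη.le
        have h2 : η * Q ≤ (⌈η * Q⌉₊ : ℝ) := Nat.le_ceil _
        have h3 : ((⌈η * Q⌉₊ : ℕ) : ℝ) ≤ (A : ℝ) := by
          exact_mod_cast Nat.cast_le.mpr (le_max_right 1 ⌈η * Q⌉₊)
        nlinarith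
      have hNle2 : (N : ℝ) ≤ 2 * A * (1 / η) := by
        rw [mul_one_div, le_div_iff₀ hη]
        nlinarith
      have hlogN : Real.log N ≤ Real.log 2 + Real.log A + L := by
        calc Real.log N ≤ Real.log (2 * A * (1 / η)) := Real.log_le_log hNpos hNle2
          _ = Real.log (2 * A) + Real.log (1 / η) :=
              Real.log_mul (by positivity) (by positivity)
          _ = Real.log 2 + Real.log A + L := by
              rw [Real.log_mul (by norm_num) (ne_of_gt hApos), hLdef]
      have hone : (1:ℝ) ≤ 2 * L := by nlinarith
      have hlog2L : Real.log 2 ≤ L := hL2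
      linarith
    · rw [Finset.Icc_eq_empty (by omega), Finset.sum_empty]
      positivity
  -- combine everything
  have hT0 : 0 ≤ ∑ a ∈ Finset.Icc (1:ℤ) M, g a :=
    Finset.sum_nonneg (fun a _ => hg0 a)
  have hTle : ∑ a ∈ Finset.Icc (1:ℤ) M, g a ≤ 2 * Q * (4 * L) := by
    rw [hnat]
    calc ∑ i ∈ Finset.Icc 1 N, g (i : ℤ)
        ≤ ∑ i ∈ Finset.Icc 1 N, 2 * Q * (if A ≤ i then 1 / (i : ℝ) else 0) :=
          Finset.sum_le_sum hterm
      _ = 2 * Q * ∑ i ∈ Finset.Icc 1 N, (if A ≤ i then 1 / (i : ℝ) else 0) := by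
          rw [Finset.mul_sum]
      _ = 2 * Q * ∑ i ∈ Finset.Icc A N, 1 / (i : ℝ) := by rw [hsum_ite]
      _ ≤ 2 * Q * (4 * L) := by
          apply mul_le_mul_of_nonneg_left harm_bound (by positivity)
  show ∑ a ∈ Finset.Icc (-M) M, ∑ b ∈ Finset.Icc (-M) M, F ⟨a, b⟩ ≤ 100 * Q ^ 2 * L
  calc ∑ a ∈ Finset.Icc (-M) M, ∑ b ∈ Finset.Icc (-M) M, F ⟨a, b⟩
      ≤ ∑ a ∈ Finset.Icc (-M) M, 5 * Q * g a :=
        Finset.sum_le_sum (fun a _ => hinner a)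
    _ = 5 * Q * ∑ a ∈ Finset.Icc (-M) M, g a := by rw [Finset.mul_sum]
    _ = 5 * Q * (2 * ∑ a ∈ Finset.Icc (1:ℤ) M, g a) := by rw [houter]
    _ ≤ 5 * Q * (2 * (2 * Q * (4 * L))) := by
        apply mul_le_mul_of_nonneg_left _ (by positivity)
        linarith
    _ = 80 * Q ^ 2 * L := by ring
    _ ≤ 100 * Q ^ 2 * L := by nlinarith
end
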